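/- Let p, q, r, μ be real numbers with 0 < q < p, 0 < r < 2, r·p < 2·q, and μ > 0. Then there exists a constant C > 0, depending only on p, q, r and μ, such that for all real numbers a ≥ 0 and b ≥ 0 one has a^q · b^r ≤ μ⁻¹ · a^p · b² + C · (a^p + 1). -/

import Mathlib

/-- Young-type pointwise interpolation inequality (E:Young), pointwise form. -/
theorem stmt_0 (p q r μ : ℝ) (hq : 0 < q) (hqp : q < p) (hr : 0 < r) (hr2 : r < 2)
    (hrp : r * p < 2 * q) (hμ : 0 < μ) :
    ∃ C : ℝ, 0 < C ∧ ∀ a b : ℝ, 0 ≤ a → 0 ≤ b →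
      a ^ q * b ^ r ≤ μ⁻¹ * a ^ p * b ^ (2 : ℝ) + C * (a ^ p + 1) := by
  have hp : 0 < p := hq.trans hqp
  have h2r : 0 < 2 - r := by linarith
  set t : ℝ := (2 * q - r * p) / (2 - r) with ht_def
  have ht_pos : 0 < t := div_pos (by linarith) h2r
  have ht_lt : t < p := by
    rw [ht_def, div_lt_iff₀ h2r]; nlinarith
  refine ⟨μ ^ (r / (2 - r)) + 1, by positivity, fun a b ha hb => ?_⟩
  rcases eq_or_lt_of_le ha with rfl | ha0
  · rw [Real.zero_rpow hq.ne', Real.zero_rpow hp.ne']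
    have hb2 : 0 ≤ b ^ (2:ℝ) := Real.rpow_nonneg hb 2
    have : (0:ℝ) ≤ μ ^ (r / (2 - r)) := Real.rpow_nonneg hμ.le _
    nlinarith
  -- a > 0 case
  have hconj : (2 / r).HolderConjugate (2 / (2 - r)) := by
    rw [Real.holderConjugate_iff]
    constructor
    · rw [lt_div_iff₀ hr]; linarith
    · rw [inv_div, inv_div]; field_simp; ring
  set x : ℝ := μ ^ (-(r / 2)) * a ^ (p * r / 2) * b ^ r with hx_def
  set y : ℝ := μ ^ (r / 2) * a ^ (q - p * r / 2) with hy_def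
  have hxnn : 0 ≤ x := by positivity
  have hynn : 0 ≤ y := by positivity
  have hxy : x * y = a ^ q * b ^ r := by
    rw [hx_def, hy_def]
    rw [show μ ^ (-(r / 2)) * a ^ (p * r / 2) * b ^ r * (μ ^ (r / 2) * a ^ (q - p * r / 2))
        = (μ ^ (-(r / 2)) * μ ^ (r / 2)) * (a ^ (p * r / 2) * a ^ (q - p * r / 2)) * b ^ r
      by ring]
    rw [← Real.rpow_add hμ, ← Real.rpow_add ha0,
      show p * r / 2 + (q - p * r / 2) = q by ring]
    norm_num
  have hyoung := Real.young_inequality_of_nonneg hxnn hynn hconj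
  rw [hxy] at hyoung
  -- compute x ^ (2/r)
  have hx_pow : x ^ (2 / r) = μ⁻¹ * a ^ p * b ^ (2:ℝ) := by
    rw [hx_def, Real.mul_rpow (by positivity) (Real.rpow_nonneg hb r),
      Real.mul_rpow (Real.rpow_nonneg hμ.le _) (Real.rpow_nonneg ha _),
      ← Real.rpow_mul hμ.le, ← Real.rpow_mul ha, ← Real.rpow_mul hb,
      show -(r / 2) * (2 / r) = -1 by field_simp <;> ring,
      show p * r / 2 * (2 / r) = p by field_simp <;> ring,
      show r * (2 / r) = 2 by field_simp <;> ring,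
      Real.rpow_neg_one]
  have hy_pow : y ^ (2 / (2 - r)) = μ ^ (r / (2 - r)) * a ^ t := by
    rw [hy_def, Real.mul_rpow (Real.rpow_nonneg hμ.le _) (Real.rpow_nonneg ha _),
      ← Real.rpow_mul hμ.le, ← Real.rpow_mul ha]
    congr 1
    · congr 1; field_simp
    · congr 1; rw [ht_def]; field_simp
  have hs1 : (1:ℝ) ≤ 2 / r := hconj.lt.le
  have hs2 : (1:ℝ) ≤ 2 / (2 - r) := hconj.symm.lt.le
  have h1 : x ^ (2 / r) / (2 / r) ≤ μ⁻¹ * a ^ p * b ^ (2:ℝ) := by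
    rw [hx_pow]
    exact div_le_self (by positivity) hs1
  have hat : a ^ t ≤ a ^ p + 1 := by
    rcases le_total a 1 with h | h
    · have : a ^ t ≤ 1 := Real.rpow_le_one ha h ht_pos.le
      nlinarith [Real.rpow_nonneg ha p]
    · have : a ^ t ≤ a ^ p := Real.rpow_le_rpow_of_exponent_le h ht_lt.le
      linarith
  have h2 : y ^ (2 / (2 - r)) / (2 / (2 - r)) ≤ (μ ^ (r / (2 - r)) + 1) * (a ^ p + 1) := by
    have step1 : y ^ (2 / (2 - r)) / (2 / (2 - r)) ≤ μ ^ (r / (2 - r)) * a ^ t := by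
      rw [hy_pow]
      exact div_le_self (by positivity) hs2
    have step2 : μ ^ (r / (2 - r)) * a ^ t ≤ (μ ^ (r / (2 - r)) + 1) * (a ^ p + 1) := by
      have h1' : (0:ℝ) ≤ μ ^ (r / (2 - r)) := Real.rpow_nonneg hμ.le _
      have h2' : (0:ℝ) ≤ a ^ p := Real.rpow_nonneg ha _
      nlinarith [Real.rpow_nonneg ha t]
    linarith
  linarith
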